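/- The function σ on ℍ × ℍ (equal to |q - p| if p, q share a slice ℝ + Iℝ, and to √((Re q - Re p)² + (|Im q| + |Im p|)²) otherwise) is lower semicontinuous with respect to the Euclidean topology on ℍ × ℍ, and the function τ (equal to |q - p| if p, q share a slice, and to √((Re q - Re p)² + (|Im q| - |Im p|)²) otherwise) is upper semicontinuous. -/

import Mathlib

open Quaternion

/-- Two quaternions lie on the same complex slice `ℝ + Iℝ` for some imaginary unit `I`. -/
def sameSlice (p q : ℍ[ℝ]) : Prop :=
  ∃ I : ℍ[ℝ], I ^ 2 = -1 ∧ (∃ x y : ℝ, p = (x : ℍ[ℝ]) + y • I) ∧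
    (∃ x y : ℝ, q = (x : ℍ[ℝ]) + y • I)

open Classical in
noncomputable def sliceSigma (q p : ℍ[ℝ]) : ℝ :=
  if sameSlice p q then ‖q - p‖
  else Real.sqrt ((q.re - p.re) ^ 2 + (‖q.im‖ + ‖p.im‖) ^ 2)

open Classical in
noncomputable def sliceTau (q p : ℍ[ℝ]) : ℝ :=
  if sameSlice p q then ‖q - p‖
  else Real.sqrt ((q.re - p.re) ^ 2 + (‖q.im‖ - ‖p.im‖) ^ 2)

/- ## Auxiliary lemmas -/

lemma norm_sq_decomp (a : ℍ[ℝ]) : ‖a‖ ^ 2 = a.re ^ 2 + ‖a.im‖ ^ 2 := by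
  have h1 : ‖a‖ ^ 2 = normSq a := by rw [sq, ← Quaternion.normSq_eq_norm_mul_self]
  have h2 : ‖a.im‖ ^ 2 = normSq a.im := by rw [sq, ← Quaternion.normSq_eq_norm_mul_self]
  rw [h1, h2, Quaternion.normSq_def', Quaternion.normSq_def']
  simp [pow_two]; ring

lemma norm_eq_sqrt (q p : ℍ[ℝ]) :
    ‖q - p‖ = Real.sqrt ((q.re - p.re) ^ 2 + ‖q.im - p.im‖ ^ 2) := by
  have : (q - p).re = q.re - p.re := by simp
  have h2 : (q - p).im = q.im - p.im := by simp
  rw [← this, ← h2, ← norm_sq_decomp, Real.sqrt_sq (norm_nonneg _)]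

lemma norm_le_f (q p : ℍ[ℝ]) :
    ‖q - p‖ ≤ Real.sqrt ((q.re - p.re) ^ 2 + (‖q.im‖ + ‖p.im‖) ^ 2) := by
  rw [norm_eq_sqrt]
  apply Real.sqrt_le_sqrt
  have h := norm_sub_le q.im p.im
  have h0 : (0:ℝ) ≤ ‖q.im - p.im‖ := norm_nonneg _
  nlinarith [norm_nonneg q.im, norm_nonneg p.im]

lemma g_le_norm (q p : ℍ[ℝ]) :
    Real.sqrt ((q.re - p.re) ^ 2 + (‖q.im‖ - ‖p.im‖) ^ 2) ≤ ‖q - p‖ := by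
  rw [norm_eq_sqrt]
  apply Real.sqrt_le_sqrt
  have h := abs_norm_sub_norm_le q.im p.im
  nlinarith [abs_nonneg (‖q.im‖ - ‖p.im‖), sq_abs (‖q.im‖ - ‖p.im‖), norm_nonneg (q.im - p.im)]

lemma norm_le_sigma (q p : ℍ[ℝ]) : ‖q - p‖ ≤ sliceSigma q p := by
  unfold sliceSigma
  split_ifs
  · exact le_refl _
  · exact norm_le_f q p

lemma tau_le_norm (q p : ℍ[ℝ]) : sliceTau q p ≤ ‖q - p‖ := by
  unfold sliceTau
  split_ifs
  · exact le_refl _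
  · exact g_le_norm q p

/-- Cross-product-like quantity whose vanishing characterises `sameSlice`. -/
noncomputable def crossQ (p q : ℍ[ℝ]) : ℝ :=
  (p.imI * q.imJ - p.imJ * q.imI) ^ 2 + (p.imI * q.imK - p.imK * q.imI) ^ 2 +
    (p.imJ * q.imK - p.imK * q.imJ) ^ 2

lemma im_comps_zero {a : ℍ[ℝ]} (h : a.im = 0) : a.imI = 0 ∧ a.imJ = 0 ∧ a.imK = 0 :=
  ⟨by rw [← Quaternion.imI_im a, h]; rfl,
   by rw [← Quaternion.imJ_im a, h]; rfl,
   by rw [← Quaternion.imK_im a, h]; rfl⟩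

lemma imaginary_unit_re {I : ℍ[ℝ]} (hI : I ^ 2 = -1) : I.re = 0 := by
  have hre : (I ^ 2).re = (-1 : ℍ[ℝ]).re := by rw [hI]
  have hI1 : (I ^ 2).imI = (-1 : ℍ[ℝ]).imI := by rw [hI]
  have hJ1 : (I ^ 2).imJ = (-1 : ℍ[ℝ]).imJ := by rw [hI]
  have hK1 : (I ^ 2).imK = (-1 : ℍ[ℝ]).imK := by rw [hI]
  simp only [pow_two, Quaternion.re_mul, Quaternion.imI_mul, Quaternion.imJ_mul,
    Quaternion.imK_mul, Quaternion.re_neg, Quaternion.re_one, Quaternion.imI_neg,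
    Quaternion.imI_one, Quaternion.imJ_neg, Quaternion.imJ_one, Quaternion.imK_neg,
    Quaternion.imK_one, neg_zero] at hre hI1 hJ1 hK1
  by_contra h
  have e1 : I.re * I.imI = 0 := by linarith
  have e2 : I.re * I.imJ = 0 := by linarith
  have e3 : I.re * I.imK = 0 := by linarith
  have h1 : I.imI = 0 := by rcases mul_eq_zero.mp e1 with h' | h'; exact absurd h' h; exact h'
  have h2 : I.imJ = 0 := by rcases mul_eq_zero.mp e2 with h' | h'; exact absurd h' h; exact h'
  have h3 : I.imK = 0 := by rcases mul_eq_zero.mp e3 with h' | h'; exact absurd h' h; exact h'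
  nlinarith

lemma unit_im_sq {u : ℍ[ℝ]} (hre : u.re = 0) (hn : normSq u = 1) : u ^ 2 = -1 := by
  have him : u.im = u := by ext <;> simp [hre]
  have h2 := Quaternion.im_sq u
  rw [him, hn] at h2
  simpa using h2

lemma sameSlice_iff_crossQ (p q : ℍ[ℝ]) : sameSlice p q ↔ crossQ p q = 0 := by
  constructor
  · rintro ⟨I, hI, ⟨x, y, rfl⟩, ⟨x', y', rfl⟩⟩
    unfold crossQ
    simp only [Quaternion.imI_add, Quaternion.imJ_add, Quaternion.imK_add,
      Quaternion.imI_coe, Quaternion.imJ_coe, Quaternion.imK_coe,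
      Quaternion.imI_smul, Quaternion.imJ_smul, Quaternion.imK_smul, smul_eq_mul]
    ring
  · intro h
    have h1 : p.imI * q.imJ - p.imJ * q.imI = 0 := by
      unfold crossQ at h; nlinarith [sq_nonneg (p.imI * q.imJ - p.imJ * q.imI),
        sq_nonneg (p.imI * q.imK - p.imK * q.imI), sq_nonneg (p.imJ * q.imK - p.imK * q.imJ)]
    have h2 : p.imI * q.imK - p.imK * q.imI = 0 := by
      unfold crossQ at h; nlinarith [sq_nonneg (p.imI * q.imJ - p.imJ * q.imI),
        sq_nonneg (p.imI * q.imK - p.imK * q.imI), sq_nonneg (p.imJ * q.imK - p.imK * q.imJ)]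
    have h3 : p.imJ * q.imK - p.imK * q.imJ = 0 := by
      unfold crossQ at h; nlinarith [sq_nonneg (p.imI * q.imJ - p.imJ * q.imI),
        sq_nonneg (p.imI * q.imK - p.imK * q.imI), sq_nonneg (p.imJ * q.imK - p.imK * q.imJ)]
    by_cases hp : p.im = 0
    · obtain ⟨hpI, hpJ, hpK⟩ := im_comps_zero hp
      by_cases hq : q.im = 0
      · obtain ⟨hqI, hqJ, hqK⟩ := im_comps_zero hq
        refine ⟨⟨0,1,0,0⟩, ?_, ⟨p.re, 0, ?_⟩, ⟨q.re, 0, ?_⟩⟩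
        · exact unit_im_sq rfl (by erw [Quaternion.normSq_def']; norm_num)
        · ext <;> simp [hpI, hpJ, hpK] <;> erw [zero_smul] <;> rfl
        · ext <;> simp [hqI, hqJ, hqK] <;> erw [zero_smul] <;> rfl
      · have hn : ‖q.im‖ ≠ 0 := by simpa using hq
        refine ⟨‖q.im‖⁻¹ • q.im, ?_, ⟨p.re, 0, ?_⟩, ⟨q.re, ‖q.im‖, ?_⟩⟩
        · apply unit_im_sq
          · simp
          · rw [Quaternion.normSq_smul, Quaternion.normSq_eq_norm_mul_self]
            field_simp
        · ext <;> simp [hpI, hpJ, hpK]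
        · rw [smul_smul, mul_inv_cancel₀ hn, one_smul]
          exact (Quaternion.re_add_im q).symm
    · have hns : normSq p.im ≠ 0 := by
        simpa [Quaternion.normSq_eq_zero] using hp
      set t : ℝ := (p.imI * q.imI + p.imJ * q.imJ + p.imK * q.imK) / normSq p.im with ht
      have hnsv : normSq p.im = p.imI ^ 2 + p.imJ ^ 2 + p.imK ^ 2 := by
        rw [Quaternion.normSq_def']; simp
      have hqim : q.im = t • p.im := by
        have hI : q.imI * normSq p.im = (p.imI * q.imI + p.imJ * q.imJ + p.imK * q.imK) * p.imI := by
          rw [hnsv]; linear_combination (-p.imJ) * h1 + (-p.imK) * h2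
        have hJ : q.imJ * normSq p.im = (p.imI * q.imI + p.imJ * q.imJ + p.imK * q.imK) * p.imJ := by
          rw [hnsv]; linear_combination p.imI * h1 + (-p.imK) * h3
        have hK : q.imK * normSq p.im = (p.imI * q.imI + p.imJ * q.imJ + p.imK * q.imK) * p.imK := by
          rw [hnsv]; linear_combination p.imI * h2 + p.imJ * h3
        ext
        · simp
        · simp only [Quaternion.imI_im, Quaternion.imI_smul, smul_eq_mul, ht]
          field_simp
          linarith [hI]
        · simp only [Quaternion.imJ_im, Quaternion.imJ_smul, smul_eq_mul, ht]
          field_simp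
          linarith [hJ]
        · simp only [Quaternion.imK_im, Quaternion.imK_smul, smul_eq_mul, ht]
          field_simp
          linarith [hK]
      have hn : ‖p.im‖ ≠ 0 := by simpa using hp
      refine ⟨‖p.im‖⁻¹ • p.im, ?_, ⟨p.re, ‖p.im‖, ?_⟩, ⟨q.re, t * ‖p.im‖, ?_⟩⟩
      · apply unit_im_sq
        · simp
        · rw [Quaternion.normSq_smul, Quaternion.normSq_eq_norm_mul_self]
          field_simp
      · rw [smul_smul, mul_inv_cancel₀ hn, one_smul]
        exact (Quaternion.re_add_im p).symm
      · rw [smul_smul, mul_assoc, mul_inv_cancel₀ hn, mul_one, ← hqim]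
        exact (Quaternion.re_add_im q).symm

lemma continuous_crossQ : Continuous fun qp : ℍ[ℝ] × ℍ[ℝ] => crossQ qp.2 qp.1 := by
  unfold crossQ
  have c1 := Quaternion.continuous_imI
  have c2 := Quaternion.continuous_imJ
  have c3 := Quaternion.continuous_imK
  fun_prop

lemma isClosed_sameSlice : IsClosed {qp : ℍ[ℝ] × ℍ[ℝ] | sameSlice qp.2 qp.1} := by
  have : {qp : ℍ[ℝ] × ℍ[ℝ] | sameSlice qp.2 qp.1}
      = (fun qp : ℍ[ℝ] × ℍ[ℝ] => crossQ qp.2 qp.1) ⁻¹' {0} := by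
    ext qp
    simp [sameSlice_iff_crossQ, Set.mem_preimage]
  rw [this]
  exact isClosed_singleton.preimage continuous_crossQ

lemma continuous_f : Continuous fun qp : ℍ[ℝ] × ℍ[ℝ] =>
    Real.sqrt ((qp.1.re - qp.2.re) ^ 2 + (‖qp.1.im‖ + ‖qp.2.im‖) ^ 2) := by
  have c1 := Quaternion.continuous_re
  have c2 := Quaternion.continuous_im
  apply Real.continuous_sqrt.comp
  fun_prop

lemma continuous_g : Continuous fun qp : ℍ[ℝ] × ℍ[ℝ] =>
    Real.sqrt ((qp.1.re - qp.2.re) ^ 2 + (‖qp.1.im‖ - ‖qp.2.im‖) ^ 2) := by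
  have c1 := Quaternion.continuous_re
  have c2 := Quaternion.continuous_im
  apply Real.continuous_sqrt.comp
  fun_prop

/-- `σ` is lower semicontinuous and `τ` is upper semicontinuous on `ℍ × ℍ`. -/
theorem sigma_lsc_tau_usc :
    LowerSemicontinuous (fun qp : ℍ[ℝ] × ℍ[ℝ] => sliceSigma qp.1 qp.2) ∧
    UpperSemicontinuous (fun qp : ℍ[ℝ] × ℍ[ℝ] => sliceTau qp.1 qp.2) := by
  have hopen : IsOpen {qp : ℍ[ℝ] × ℍ[ℝ] | ¬ sameSlice qp.2 qp.1} := by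
    have := isClosed_sameSlice.isOpen_compl
    convert this using 1
    rfl
  have hcont : Continuous fun qp : ℍ[ℝ] × ℍ[ℝ] => ‖qp.1 - qp.2‖ := by fun_prop
  constructor
  · intro x y hy
    by_cases hx : sameSlice x.2 x.1
    · have hval : sliceSigma x.1 x.2 = ‖x.1 - x.2‖ := if_pos hx
      simp only at hy
      rw [hval] at hy
      have hev : ∀ᶠ z in nhds x, y < ‖z.1 - z.2‖ :=
        (hcont.continuousAt (x := x)).eventually_const_lt hy
      filter_upwards [hev] with z hz
      exact lt_of_lt_of_le hz (norm_le_sigma z.1 z.2)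
    · have hval : sliceSigma x.1 x.2 =
          Real.sqrt ((x.1.re - x.2.re) ^ 2 + (‖x.1.im‖ + ‖x.2.im‖) ^ 2) := if_neg hx
      simp only at hy
      rw [hval] at hy
      have hnb : ∀ᶠ z in nhds x, ¬ sameSlice z.2 z.1 := hopen.eventually_mem hx
      have hf : ∀ᶠ z in nhds x,
          y < Real.sqrt ((z.1.re - z.2.re) ^ 2 + (‖z.1.im‖ + ‖z.2.im‖) ^ 2) :=
        (continuous_f.continuousAt (x := x)).eventually_const_lt hy
      filter_upwards [hnb, hf] with z hz1 hz2
      show y < _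
      rw [show sliceSigma z.1 z.2 =
          Real.sqrt ((z.1.re - z.2.re) ^ 2 + (‖z.1.im‖ + ‖z.2.im‖) ^ 2) from if_neg hz1]
      exact hz2
  · intro x y hy
    by_cases hx : sameSlice x.2 x.1
    · have hval : sliceTau x.1 x.2 = ‖x.1 - x.2‖ := if_pos hx
      simp only at hy
      rw [hval] at hy
      have hev : ∀ᶠ z in nhds x, ‖z.1 - z.2‖ < y :=
        (hcont.continuousAt (x := x)).eventually_lt_const hy
      filter_upwards [hev] with z hz
      exact lt_of_le_of_lt (tau_le_norm z.1 z.2) hz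
    · have hval : sliceTau x.1 x.2 =
          Real.sqrt ((x.1.re - x.2.re) ^ 2 + (‖x.1.im‖ - ‖x.2.im‖) ^ 2) := if_neg hx
      simp only at hy
      rw [hval] at hy
      have hnb : ∀ᶠ z in nhds x, ¬ sameSlice z.2 z.1 := hopen.eventually_mem hx
      have hg : ∀ᶠ z in nhds x,
          Real.sqrt ((z.1.re - z.2.re) ^ 2 + (‖z.1.im‖ - ‖z.2.im‖) ^ 2) < y :=
        (continuous_g.continuousAt (x := x)).eventually_lt_const hy
      filter_upwards [hnb, hg] with z hz1 hz2
      show _ < y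
      rw [show sliceTau z.1 z.2 =
          Real.sqrt ((z.1.re - z.2.re) ^ 2 + (‖z.1.im‖ - ‖z.2.im‖) ^ 2) from if_neg hz1]
      exact hz2
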